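/- arXiv:0811.3580 — 11 statements merged into one kernel-verified Lean document; each statement's English description precedes it below -/
import Mathlib

section
/- Suppose dim E ≥ 3. If the data (C,c) is pseudo-parallel with some value φ ∈ ℝ, then it is semi-parallel, i.e. P(X,Y,V,W,Z) = 0 for all X,Y,V,W,Z ∈ E. (This is the pointwise, algebraic content of the main theorem: a Lagrangian pseudo-parallel submanifold Mⁿ, n ≥ 3, of a complex space form M̃ⁿ(4c) is semi-parallel.) -/
open RealInnerProductSpace

theorem pseudo_parallel_implies_semi_parallel
    {E : Type*} [NormedAddCommGroup E] [InnerProductSpace ℝ E] [FiniteDimensional ℝ E]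
    (hdim : 3 ≤ Module.finrank ℝ E)
    (C : E →ₗ[ℝ] E →ₗ[ℝ] E →ₗ[ℝ] ℝ)
    (hC1 : ∀ X Y Z : E, C X Y Z = C Y X Z)
    (hC2 : ∀ X Y Z : E, C X Y Z = C X Z Y)
    (A : E → E → E)
    (hA : ∀ X Y Z : E, ⟪A X Y, Z⟫ = C X Y Z)
    (c : ℝ) (R : E → E → E → E)
    (hR : ∀ X Y Z : E, R X Y Z = c • (⟪Y, Z⟫ • X - ⟪X, Z⟫ • Y) + A X (A Y Z) - A Y (A X Z))
    (P : E → E → E → E → E → ℝ)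
    (hP : ∀ X Y V W Z : E, P X Y V W Z
      = ⟪R X Y (A V W), Z⟫ - C (R X Y V) W Z - C V (R X Y W) Z)
    (Q : E → E → E → E → E → ℝ)
    (hQ : ∀ X Y V W Z : E, Q X Y V W Z
      = ⟪Y, V⟫ * C X W Z - ⟪X, V⟫ * C Y W Z + ⟪Y, W⟫ * C X V Z - ⟪X, W⟫ * C Y V Z)
    (φ : ℝ)
    (hpp : ∀ X Y V W Z : E, P X Y V W Z + φ * Q X Y V W Z = 0) :
    ∀ X Y V W Z : E, P X Y V W Z = 0 := by
  -- A is symmetric in the inner-product sense, and the commutator term is skew: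
  have hkey : ∀ X Y U Z : E, ⟪A X (A Y U), Z⟫ = ⟪U, A Y (A X Z)⟫ := by
    intro X Y U Z
    rw [hA, hC2, ← hA, real_inner_comm, hA, hC2, ← hA, real_inner_comm]
  -- R(X,Y) is skew-symmetric
  have hskew : ∀ X Y U Z : E, ⟪R X Y U, Z⟫ = -⟪U, R X Y Z⟫ := by
    intro X Y U Z
    rw [hR X Y U, hR X Y Z]
    simp only [inner_add_left, inner_sub_left, inner_smul_left, inner_add_right,
      inner_sub_right, inner_smul_right, real_inner_smul_left, real_inner_smul_right,
      conj_trivial]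
    have h1 := hkey X Y U Z
    have h2 := hkey Y X U Z
    rw [real_inner_comm U X, real_inner_comm U Y]
    linarith [h1, h2]
  -- canonical form of P
  have hP2 : ∀ X Y V W Z : E, P X Y V W Z
      = -(C (R X Y Z) V W + C (R X Y V) W Z + C (R X Y W) V Z) := by
    intro X Y V W Z
    rw [hP]
    have t1 : ⟪R X Y (A V W), Z⟫ = -(C (R X Y Z) V W) := by
      rw [hskew, hA, hC2 V W (R X Y Z), hC1 V (R X Y Z) W]
    rw [t1, hC1 V (R X Y W) Z]
    ring
  -- P is symmetric in its last two arguments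
  have hPsym : ∀ X Y V W Z : E, P X Y V W Z = P X Y V Z W := by
    intro X Y V W Z
    rw [hP2, hP2, hC2 (R X Y V) W Z]
    ring
  rcases eq_or_ne φ 0 with h0 | hφ
  · intro X Y V W Z
    have := hpp X Y V W Z
    rw [h0] at this
    linarith
  · -- key identity forced on C
    have hT : ∀ X Y V W Z : E,
        ⟪Y, W⟫ * C X V Z - ⟪X, W⟫ * C Y V Z
          = ⟪Y, Z⟫ * C X V W - ⟪X, Z⟫ * C Y V W := by
      intro X Y V W Z
      have h1 := hpp X Y V W Z
      have h2 := hpp X Y V Z W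
      have h3 := hPsym X Y V W Z
      rw [hQ] at h1 h2
      have e1 : C X Z W = C X W Z := hC2 X Z W
      have e2 : C Y Z W = C Y W Z := hC2 Y Z W
      have h4 : φ * ((⟪Y, W⟫ * C X V Z - ⟪X, W⟫ * C Y V Z)
          - (⟪Y, Z⟫ * C X V W - ⟪X, Z⟫ * C Y V W)) = 0 := by
        rw [e1, e2] at h2
        nlinarith [h1, h2, h3]
      rcases mul_eq_zero.mp h4 with h | h
      · exact absurd h hφ
      · linarith
    -- the "star" consequence for a unit vector e
    have hstar : ∀ e X V Z : E, ⟪e, e⟫ = 1 →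
        C X V Z = ⟪X, e⟫ * C e V Z + ⟪e, Z⟫ * C X V e - ⟪X, Z⟫ * C e V e := by
      intro e X V Z he
      have := hT X e V e Z
      rw [he] at this
      linarith
    -- pick three orthonormal vectors
    have b := stdOrthonormalBasis ℝ E
    have h0lt : (0 : ℕ) < Module.finrank ℝ E := by omega
    have h1lt : (1 : ℕ) < Module.finrank ℝ E := by omega
    have h2lt : (2 : ℕ) < Module.finrank ℝ E := by omega
    set e₁ := b ⟨0, h0lt⟩ with he₁
    set e₂ := b ⟨1, h1lt⟩ with he₂
    set e₃ := b ⟨2, h2lt⟩ with he₃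
    have hon := orthonormal_iff_ite.mp b.orthonormal
    have n11 : ⟪e₁, e₁⟫ = 1 := by rw [he₁, hon]; simp
    have n22 : ⟪e₂, e₂⟫ = 1 := by rw [he₂, hon]; simp
    have n33 : ⟪e₃, e₃⟫ = 1 := by rw [he₃, hon]; simp
    have n12 : ⟪e₁, e₂⟫ = 0 := by rw [he₁, he₂, hon]; simp
    have n21 : ⟪e₂, e₁⟫ = 0 := by rw [real_inner_comm]; exact n12
    have n13 : ⟪e₁, e₃⟫ = 0 := by rw [he₁, he₃, hon]; simp
    have n31 : ⟪e₃, e₁⟫ = 0 := by rw [real_inner_comm]; exact n13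
    have n23 : ⟪e₂, e₃⟫ = 0 := by rw [he₂, he₃, hon]; simp
    have n32 : ⟪e₃, e₂⟫ = 0 := by rw [real_inner_comm]; exact n23
    -- diagonal entries vanish
    have hdiag : ∀ V : E, C e₁ V e₁ = 0 ∧ C e₂ V e₂ = 0 ∧ C e₃ V e₃ = 0 := by
      intro V
      have d12 : C e₂ V e₂ = -(C e₁ V e₁) := by
        have := hstar e₁ e₂ V e₂ n11
        rw [n21, n12, n22] at this
        linarith
      have d13 : C e₃ V e₃ = -(C e₁ V e₁) := by
        have := hstar e₁ e₃ V e₃ n11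
        rw [n31, n13, n33] at this
        linarith
      have d23 : C e₃ V e₃ = -(C e₂ V e₂) := by
        have := hstar e₂ e₃ V e₃ n22
        rw [n32, n23, n33] at this
        linarith
      refine ⟨by linarith, by linarith, by linarith⟩
    -- mixed entry vanishes
    have hmix : ∀ V : E, C e₁ V e₂ = 0 := by
      intro V
      have := hstar e₃ e₁ V e₂ n33
      rw [n13, n32, n12, (hdiag V).2.2] at this
      simpa using this
    -- C e₁ V Z = 0 for all Z
    have hCZ : ∀ V Z : E, C e₁ V Z = 0 := by
      intro V Z
      have := hstar e₂ e₁ V Z n22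
      rw [n12, hmix V, (hdiag V).2.1] at this
      simpa using this
    -- C X V e₁ = 0 for all X
    have hCX : ∀ X V : E, C X V e₁ = 0 := by
      intro X V
      have := hstar e₂ X V e₁ n22
      have m21 : C e₂ V e₁ = 0 := by
        rw [hC1 e₂ V e₁, hC2 V e₂ e₁, hC1 V e₁ e₂]
        exact hmix V
      rw [n21, m21, (hdiag V).2.1] at this
      simpa using this
    -- C vanishes identically
    have hC0 : ∀ X V Z : E, C X V Z = 0 := by
      intro X V Z
      have := hstar e₁ X V Z n11
      rw [hCZ V Z, hCX X V, (hdiag V).1] at this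
      simpa using this
    intro X Y V W Z
    have := hpp X Y V W Z
    rw [hQ, hC0, hC0, hC0, hC0] at this
    linarith
end

section
/- For all X,Y,V,W,Z ∈ E one has P(X,Y,V,W,Z) = P(X,Y,V,Z,W); that is, the scalar component ⟨(R̄·h)(X,Y,V,W), JZ⟩ of the derived second fundamental form is symmetric in W and Z. -/
open RealInnerProductSpace

theorem P_symmetric_in_last_two
    {E : Type*} [NormedAddCommGroup E] [InnerProductSpace ℝ E] [FiniteDimensional ℝ E]
    (C : E →ₗ[ℝ] E →ₗ[ℝ] E →ₗ[ℝ] ℝ)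
    (hC1 : ∀ X Y Z : E, C X Y Z = C Y X Z)
    (hC2 : ∀ X Y Z : E, C X Y Z = C X Z Y)
    (A : E → E → E)
    (hA : ∀ X Y Z : E, ⟪A X Y, Z⟫ = C X Y Z)
    (c : ℝ) (R : E → E → E → E)
    (hR : ∀ X Y Z : E, R X Y Z = c • (⟪Y, Z⟫ • X - ⟪X, Z⟫ • Y) + A X (A Y Z) - A Y (A X Z))
    (P : E → E → E → E → E → ℝ)
    (hP : ∀ X Y V W Z : E, P X Y V W Z
      = ⟪R X Y (A V W), Z⟫ - C (R X Y V) W Z - C V (R X Y W) Z) :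
    ∀ X Y V W Z : E, P X Y V W Z = P X Y V Z W := by
  intro X Y V W Z
  -- basic symmetry facts
  have hCperm : ∀ a b c : E, C a b c = C b c a := fun a b c => by rw [hC1, hC2]
  have hAs : ∀ a b : E, A a b = A b a := fun a b =>
    ext_inner_right ℝ fun z => by rw [hA, hA, hC1]
  have hAd : ∀ a x y : E, ⟪A a x, y⟫ = ⟪x, A a y⟫ := fun a x y => by
    rw [hA, real_inner_comm, hA, hC2]
  have key : ∀ W Z : E, P X Y V W Z =
      c * (C Y V W * ⟪X, Z⟫ - C X V W * ⟪Y, Z⟫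
        - ⟪Y, V⟫ * C X W Z + ⟪X, V⟫ * C Y W Z
        - ⟪Y, W⟫ * C X V Z + ⟪X, W⟫ * C Y V Z)
      + ⟪A Y (A X Z), A V W⟫ - ⟪A X (A Y Z), A V W⟫
      - ⟪A X (A Y V), A W Z⟫ + ⟪A Y (A X V), A W Z⟫
      - ⟪A X (A Y W), A V Z⟫ + ⟪A Y (A X W), A V Z⟫ := by
    intro W Z
    have e1 : C (R X Y V) W Z = ⟪A W Z, R X Y V⟫ := by
      rw [hA, hCperm (R X Y V)]
    have e2 : C V (R X Y W) Z = ⟪A V Z, R X Y W⟫ := by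
      rw [hA, hC2 V]
    rw [hP, e1, e2, hR, hR, hR]
    simp only [inner_add_left, inner_sub_left, inner_add_right, inner_sub_right,
      real_inner_smul_left, real_inner_smul_right]
    have a1 : ⟪Y, A V W⟫ = C Y V W := by
      rw [real_inner_comm, hA]; exact (hCperm Y V W).symm
    have a2 : ⟪X, A V W⟫ = C X V W := by
      rw [real_inner_comm, hA]; exact (hCperm X V W).symm
    have a3 : ⟪A W Z, X⟫ = C X W Z := by rw [hA]; exact (hCperm X W Z).symm
    have a4 : ⟪A W Z, Y⟫ = C Y W Z := by rw [hA]; exact (hCperm Y W Z).symm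
    have a5 : ⟪A V Z, X⟫ = C X V Z := by rw [hA]; exact (hCperm X V Z).symm
    have a6 : ⟪A V Z, Y⟫ = C Y V Z := by rw [hA]; exact (hCperm Y V Z).symm
    have b1 : ⟪A X (A Y (A V W)), Z⟫ = ⟪A Y (A X Z), A V W⟫ := by
      rw [hAd, hAd, real_inner_comm]
    have b2 : ⟪A Y (A X (A V W)), Z⟫ = ⟪A X (A Y Z), A V W⟫ := by
      rw [hAd, hAd, real_inner_comm]
    have b3 : ⟪A W Z, A X (A Y V)⟫ = ⟪A X (A Y V), A W Z⟫ := real_inner_comm _ _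
    have b4 : ⟪A W Z, A Y (A X V)⟫ = ⟪A Y (A X V), A W Z⟫ := real_inner_comm _ _
    have b5 : ⟪A V Z, A X (A Y W)⟫ = ⟪A X (A Y W), A V Z⟫ := real_inner_comm _ _
    have b6 : ⟪A V Z, A Y (A X W)⟫ = ⟪A Y (A X W), A V Z⟫ := real_inner_comm _ _
    rw [a1, a2, a3, a4, a5, a6, b1, b2, b3, b4, b5, b6]
    ring
  rw [key W Z, key Z W]
  have h1 : C X W Z = C X Z W := hC2 X W Z
  have h2 : C Y W Z = C Y Z W := hC2 Y W Z
  have h3 : A W Z = A Z W := hAs W Z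
  have h4 : (⟪A X (A Y V), A W Z⟫ : ℝ) = ⟪A X (A Y V), A Z W⟫ := by rw [h3]
  have h5 : (⟪A Y (A X V), A W Z⟫ : ℝ) = ⟪A Y (A X V), A Z W⟫ := by rw [h3]
  linear_combination (-(c * ⟪Y, V⟫)) * h1 + (c * ⟪X, V⟫) * h2 - h4 + h5
end

section
/- Suppose the data (C,c) is pseudo-parallel with value φ ∈ ℝ and φ ≠ 0. Then Q(X,Y,V,W,Z) = Q(X,Y,V,Z,W) for all X,Y,V,W,Z ∈ E; that is, the scalar component ⟨Q(g,h)(X,Y,V,W), JZ⟩ is symmetric in W and Z. -/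
open RealInnerProductSpace

theorem Q_symmetric_in_last_two_of_pseudo_parallel
    {E : Type*} [NormedAddCommGroup E] [InnerProductSpace ℝ E] [FiniteDimensional ℝ E]
    (C : E →ₗ[ℝ] E →ₗ[ℝ] E →ₗ[ℝ] ℝ)
    (hC1 : ∀ X Y Z : E, C X Y Z = C Y X Z)
    (hC2 : ∀ X Y Z : E, C X Y Z = C X Z Y)
    (A : E → E → E)
    (hA : ∀ X Y Z : E, ⟪A X Y, Z⟫ = C X Y Z)
    (c : ℝ) (R : E → E → E → E)
    (hR : ∀ X Y Z : E, R X Y Z = c • (⟪Y, Z⟫ • X - ⟪X, Z⟫ • Y) + A X (A Y Z) - A Y (A X Z))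
    (P : E → E → E → E → E → ℝ)
    (hP : ∀ X Y V W Z : E, P X Y V W Z
      = ⟪R X Y (A V W), Z⟫ - C (R X Y V) W Z - C V (R X Y W) Z)
    (Q : E → E → E → E → E → ℝ)
    (hQ : ∀ X Y V W Z : E, Q X Y V W Z
      = ⟪Y, V⟫ * C X W Z - ⟪X, V⟫ * C Y W Z + ⟪Y, W⟫ * C X V Z - ⟪X, W⟫ * C Y V Z)
    (φ : ℝ)
    (hpp : ∀ X Y V W Z : E, P X Y V W Z + φ * Q X Y V W Z = 0)
    (hφ : φ ≠ 0) :
    ∀ X Y V W Z : E, Q X Y V W Z = Q X Y V Z W := by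
  -- A is a symmetric operator
  have hAsym : ∀ X a b : E, ⟪A X a, b⟫ = ⟪a, A X b⟫ := by
    intro X a b
    rw [hA, real_inner_comm, hA, hC2]
  have hAA : ∀ X Y u v : E, ⟪A X (A Y u), v⟫ = ⟪u, A Y (A X v)⟫ := by
    intro X Y u v
    rw [hAsym, hAsym]
  -- R X Y is skew-symmetric
  have hskew : ∀ X Y u v : E, ⟪R X Y u, v⟫ = -⟪u, R X Y v⟫ := by
    intro X Y u v
    rw [hR, hR]
    simp only [inner_add_left, inner_sub_left, real_inner_smul_left,
      inner_add_right, inner_sub_right, real_inner_smul_right]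
    rw [hAA X Y u v, hAA Y X u v, real_inner_comm u X, real_inner_comm u Y]
    ring
  have hRC : ∀ X Y V W Z : E, ⟪R X Y (A V W), Z⟫ = -C V W (R X Y Z) := by
    intro X Y V W Z
    rw [hskew, hA]
  -- P is symmetric in its last two arguments
  have hPsym : ∀ X Y V W Z : E, P X Y V W Z = P X Y V Z W := by
    intro X Y V W Z
    rw [hP, hP, hRC, hRC, hC2 V W (R X Y Z), hC2 (R X Y V) W Z, hC2 V (R X Y W) Z]
    ring
  intro X Y V W Z
  have h1 := hpp X Y V W Z
  have h2 := hpp X Y V Z W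
  rw [hPsym X Y V W Z] at h1
  have : φ * Q X Y V W Z = φ * Q X Y V Z W := by linarith
  exact mul_left_cancel₀ hφ this
end

section
/- Suppose that for all X,Y,V,W,Z ∈ E one has ⟨Y,W⟩C(V,X,Z) − ⟨X,W⟩C(Y,V,Z) = ⟨Y,Z⟩C(V,X,W) − ⟨X,Z⟩C(Y,V,W). Then for every X ∈ E and all Y, Z ∈ E with Y ⊥ X and Z ⊥ X one has ⟨X,X⟩·C(Y,Z,X) = −⟨Y,Z⟩·C(X,X,X). -/
open RealInnerProductSpace

theorem perp_identity_of_symmetry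
    {E : Type*} [NormedAddCommGroup E] [InnerProductSpace ℝ E] [FiniteDimensional ℝ E]
    (C : E →ₗ[ℝ] E →ₗ[ℝ] E →ₗ[ℝ] ℝ)
    (hC1 : ∀ X Y Z : E, C X Y Z = C Y X Z)
    (hC2 : ∀ X Y Z : E, C X Y Z = C X Z Y)
    (hsym : ∀ X Y V W Z : E,
      ⟪Y, W⟫ * C V X Z - ⟪X, W⟫ * C Y V Z
        = ⟪Y, Z⟫ * C V X W - ⟪X, Z⟫ * C Y V W) :
    ∀ X Y Z : E, ⟪X, Y⟫ = 0 → ⟪X, Z⟫ = 0 →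
      (⟪X, X⟫) * C Y Z X = -(⟪Y, Z⟫ * C X X X) := by
  intro X Y Z hY hZ
  have h := hsym Y X X X Z
  have hYX : ⟪Y, X⟫ = (0:ℝ) := by rw [real_inner_comm]; exact hY
  rw [hYX, hZ] at h
  have hc : C X Y Z = C Y Z X := by rw [hC1, hC2, hC1]
  linarith [h, hc.symm ▸ h]
end

section
/- Suppose that for every X ∈ E and all Y, Z ⊥ X one has ⟨X,X⟩·C(Y,Z,X) = −⟨Y,Z⟩·C(X,X,X), and suppose x ∈ E is a unit vector with C(x,x,v) = 0 for all v ⊥ x. Set λ₁ = C(x,x,x). Then C(x,y,z) = −λ₁⟨y,z⟩ for all y, z ⊥ x, and C(y,z,w) = 0 for all y, z, w ⊥ x; that is, C has the umbilical form with parameter λ₁ relative to x (equivalently h(x,x) = λ₁Jx, h(x,y) = −λ₁Jy, h(y,z) = −λ₁g(y,z)Jx for y,z ⊥ x). -/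
open RealInnerProductSpace

theorem umbilical_form_of_critical_point
    {E : Type*} [NormedAddCommGroup E] [InnerProductSpace ℝ E] [FiniteDimensional ℝ E]
    (C : E →ₗ[ℝ] E →ₗ[ℝ] E →ₗ[ℝ] ℝ)
    (hC1 : ∀ X Y Z : E, C X Y Z = C Y X Z)
    (hC2 : ∀ X Y Z : E, C X Y Z = C X Z Y)
    (hperp : ∀ X Y Z : E, ⟪X, Y⟫ = 0 → ⟪X, Z⟫ = 0 →
      (⟪X, X⟫) * C Y Z X = -(⟪Y, Z⟫ * C X X X))
    (x : E) (hx : ‖x‖ = 1)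
    (hxx : ∀ v : E, ⟪x, v⟫ = 0 → C x x v = 0)
    (l₁ : ℝ) (hl : l₁ = C x x x) :
    (∀ y z : E, ⟪x, y⟫ = 0 → ⟪x, z⟫ = 0 → C x y z = -l₁ * ⟪y, z⟫) ∧
    (∀ y z w : E, ⟪x, y⟫ = 0 → ⟪x, z⟫ = 0 → ⟪x, w⟫ = 0 → C y z w = 0) := by
  have hxx1 : ⟪x, x⟫ = (1:ℝ) := by
    rw [real_inner_self_eq_norm_mul_norm, hx]; norm_num
  have part1 : ∀ y z : E, ⟪x, y⟫ = 0 → ⟪x, z⟫ = 0 → C x y z = -l₁ * ⟪y, z⟫ := by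
    intro y z hy hz
    have h := hperp x y z hy hz
    rw [hxx1, one_mul] at h
    have : C x y z = C y z x := by rw [hC1, hC2]
    rw [this, h, hl]; ring
  refine ⟨part1, ?_⟩
  -- diagonal vanishing
  have diag : ∀ y : E, ⟪x, y⟫ = 0 → C y y y = 0 := by
    intro y hy
    set n : ℝ := ⟪y, y⟫ with hn
    have hyx : ⟪y, x⟫ = 0 := by rw [real_inner_comm]; exact hy
    have hn0 : (0:ℝ) ≤ n := real_inner_self_nonneg
    have hortho : ⟪x + y, y - n • x⟫ = (0:ℝ) := by
      simp [inner_add_left, inner_sub_right, inner_smul_right, hy, hyx, hxx1]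
      rw [hx, hn, real_inner_self_eq_norm_sq]; ring
    have h := hperp (x + y) (y - n • x) (y - n • x) hortho hortho
    simp only [map_add, map_sub, map_smul, LinearMap.add_apply, LinearMap.sub_apply,
      LinearMap.smul_apply, smul_eq_mul, inner_add_left, inner_add_right,
      inner_sub_left, inner_sub_right, inner_smul_left, inner_smul_right,
      hy, hyx, hxx1, starRingEnd_apply, star_trivial] at h
    rw [← hn] at h
    -- known values
    have e0 : C x x x = l₁ := hl.symm
    have e1 : C x x y = 0 := hxx y hy
    have e2 : C x y x = 0 := by rw [hC2]; exact e1
    have e3 : C y x x = 0 := by rw [hC1]; exact e2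
    have e4 : C x y y = -l₁ * n := part1 y y hy hy
    have e5 : C y x y = -l₁ * n := by rw [hC1]; exact e4
    have e6 : C y y x = -l₁ * n := by rw [hC2]; exact e5
    rw [e0, e1, e2, e3, e4, e5, e6] at h
    have key : C y y y * (1 + n)^2 = 0 := by linear_combination h
    have hpos : (0:ℝ) < (1 + n)^2 := by positivity
    rcases mul_eq_zero.mp key with h' | h'
    · exact h'
    · exact absurd h' (ne_of_gt hpos)
  -- polarization
  intro y z w hy hz hw
  have hyz : ⟪x, y + z⟫ = 0 := by rw [inner_add_right, hy, hz]; ring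
  have hyw : ⟪x, y + w⟫ = 0 := by rw [inner_add_right, hy, hw]; ring
  have hzw : ⟪x, z + w⟫ = 0 := by rw [inner_add_right, hz, hw]; ring
  have hyzw : ⟪x, y + z + w⟫ = 0 := by rw [inner_add_right, hyz, hw]; ring
  have D1 := diag (y + z + w) hyzw
  have D2 := diag (y + z) hyz
  have D3 := diag (y + w) hyw
  have D4 := diag (z + w) hzw
  have D5 := diag y hy
  have D6 := diag z hz
  have D7 := diag w hw
  simp only [map_add, LinearMap.add_apply] at D1 D2 D3 D4
  linarith [D1, D2, D3, D4, D5, D6, D7,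
    hC1 y z w, hC1 y w z, hC1 z w y, hC1 z y w, hC1 w y z, hC1 w z y,
    hC2 y z w, hC2 y w z, hC2 z w y, hC2 z y w, hC2 w y z, hC2 w z y,
    hC1 y z y, hC2 y z y, hC1 z y y, hC2 y y z,
    hC1 y w y, hC2 y w y, hC1 w y y, hC2 y y w,
    hC1 z w z, hC2 z w z, hC1 w z z, hC2 z z w,
    hC1 z y z, hC2 z y z, hC1 w y w, hC2 w y w, hC1 w z w, hC2 w z w]
end

section
/- Suppose that for every X ∈ E and all Y, Z ⊥ X one has ⟨X,X⟩·C(Y,Z,X) = −⟨Y,Z⟩·C(X,X,X), and suppose x ∈ E is a unit vector with A_x x = λ₁ x where λ₁ = C(x,x,x). Then A_x y = −λ₁ y for every y ∈ E with y ⊥ x. -/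
open RealInnerProductSpace

theorem shape_operator_on_orthogonal_complement
    {E : Type*} [NormedAddCommGroup E] [InnerProductSpace ℝ E] [FiniteDimensional ℝ E]
    (C : E →ₗ[ℝ] E →ₗ[ℝ] E →ₗ[ℝ] ℝ)
    (hC1 : ∀ X Y Z : E, C X Y Z = C Y X Z)
    (hC2 : ∀ X Y Z : E, C X Y Z = C X Z Y)
    (A : E → E → E)
    (hA : ∀ X Y Z : E, ⟪A X Y, Z⟫ = C X Y Z)
    (hperp : ∀ X Y Z : E, ⟪X, Y⟫ = 0 → ⟪X, Z⟫ = 0 →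
      (⟪X, X⟫) * C Y Z X = -(⟪Y, Z⟫ * C X X X))
    (x : E) (hx : ‖x‖ = 1)
    (l₁ : ℝ) (hl : l₁ = C x x x)
    (hAx : A x x = l₁ • x) :
    ∀ y : E, ⟪x, y⟫ = 0 → A x y = -l₁ • y := by
  intro y hy
  have hxx : ⟪x, x⟫ = (1 : ℝ) := by
    rw [real_inner_self_eq_norm_sq, hx]; norm_num
  apply ext_inner_right ℝ
  intro Z
  set w := Z - ⟪x, Z⟫ • x with hw
  have hxw : ⟪x, w⟫ = 0 := by
    simp [hw, inner_sub_right, inner_smul_right, hxx, hx]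
  -- C x y w = -⟪y,w⟫ * l₁
  have key : C x y w = -(⟪y, w⟫ * l₁) := by
    have h := hperp x y w hy hxw
    rw [hxx, one_mul] at h
    rw [hC1, hC2, h, hl]
  -- C x y x = 0
  have hzero : C x y x = 0 := by
    rw [hC2, ← hA, hAx, real_inner_smul_left, hy, mul_zero]
  have hZ : Z = ⟪x, Z⟫ • x + w := by simp [hw]
  have hyx : ⟪y, x⟫ = 0 := by rw [real_inner_comm]; exact hy
  calc ⟪A x y, Z⟫ = C x y Z := hA x y Z
    _ = C x y (⟪x, Z⟫ • x + w) := by rw [← hZ]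
    _ = ⟪x, Z⟫ * C x y x + C x y w := by simp
    _ = -(⟪y, w⟫ * l₁) := by rw [hzero, key]; ring
    _ = ⟪-l₁ • y, Z⟫ := by
        rw [real_inner_smul_left]
        nth_rewrite 1 [hZ]
        rw [inner_add_right, real_inner_smul_right, hyx]
        ring
end

section
/- Suppose dim E ≥ 2, suppose C has the umbilical form with parameter λ₁ ≠ 0 relative to a unit vector x ∈ E, and suppose the data (C,c) is pseudo-parallel with value φ ∈ ℝ. Then 3λ₁(c − 2λ₁²) = 2φλ₁, and hence φ = (3/2)(c − 2λ₁²). -/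
open RealInnerProductSpace

theorem phi_first_value
    {E : Type*} [NormedAddCommGroup E] [InnerProductSpace ℝ E] [FiniteDimensional ℝ E]
    (hdim : 2 ≤ Module.finrank ℝ E)
    (C : E →ₗ[ℝ] E →ₗ[ℝ] E →ₗ[ℝ] ℝ)
    (hC1 : ∀ X Y Z : E, C X Y Z = C Y X Z)
    (hC2 : ∀ X Y Z : E, C X Y Z = C X Z Y)
    (A : E → E → E)
    (hA : ∀ X Y Z : E, ⟪A X Y, Z⟫ = C X Y Z)
    (c : ℝ) (R : E → E → E → E)
    (hR : ∀ X Y Z : E, R X Y Z = c • (⟪Y, Z⟫ • X - ⟪X, Z⟫ • Y) + A X (A Y Z) - A Y (A X Z))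
    (P : E → E → E → E → E → ℝ)
    (hP : ∀ X Y V W Z : E, P X Y V W Z
      = ⟪R X Y (A V W), Z⟫ - C (R X Y V) W Z - C V (R X Y W) Z)
    (Q : E → E → E → E → E → ℝ)
    (hQ : ∀ X Y V W Z : E, Q X Y V W Z
      = ⟪Y, V⟫ * C X W Z - ⟪X, V⟫ * C Y W Z + ⟪Y, W⟫ * C X V Z - ⟪X, W⟫ * C Y V Z)
    (φ : ℝ)
    (hpp : ∀ X Y V W Z : E, P X Y V W Z + φ * Q X Y V W Z = 0)
    (x : E) (hx : ‖x‖ = 1) (l₁ : ℝ)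
    (humb1 : C x x x = l₁)
    (humb2 : ∀ v : E, ⟪x, v⟫ = 0 → C x x v = 0)
    (humb3 : ∀ v w : E, ⟪x, v⟫ = 0 → ⟪x, w⟫ = 0 → C x v w = -l₁ * ⟪v, w⟫)
    (humb4 : ∀ u v w : E, ⟪x, u⟫ = 0 → ⟪x, v⟫ = 0 → ⟪x, w⟫ = 0 → C u v w = 0)
    (hl : l₁ ≠ 0) :
    3 * l₁ * (c - 2 * l₁ ^ 2) = 2 * φ * l₁ ∧ φ = 3 / 2 * (c - 2 * l₁ ^ 2) := by
  have hx0 : x ≠ 0 := by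
    intro h; rw [h, norm_zero] at hx; norm_num at hx
  have hxx : ⟪x, x⟫ = (1 : ℝ) := by
    rw [real_inner_self_eq_norm_sq, hx]; norm_num
  -- find a unit vector y orthogonal to x
  obtain ⟨y, hxy, hyy⟩ : ∃ y : E, ⟪x, y⟫ = 0 ∧ ⟪y, y⟫ = (1 : ℝ) := by
    obtain ⟨y0, hy0mem, hy00⟩ : ∃ y ∈ (ℝ ∙ x)ᗮ, y ≠ 0 := by
      apply Submodule.exists_mem_ne_zero_of_ne_bot
      intro hbot
      have h1 : Module.finrank ℝ (ℝ ∙ x) = 1 := finrank_span_singleton hx0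
      have h2 := Submodule.finrank_add_finrank_orthogonal (𝕜 := ℝ) (ℝ ∙ x)
      rw [hbot, h1] at h2
      simp at h2
      omega
    have hy0norm : ‖y0‖ ≠ 0 := norm_ne_zero_iff.mpr hy00
    have hinner : ⟪x, y0⟫ = (0 : ℝ) :=
      (Submodule.mem_orthogonal _ y0).mp hy0mem x (Submodule.mem_span_singleton_self x)
    refine ⟨‖y0‖⁻¹ • y0, ?_, ?_⟩
    · rw [real_inner_smul_right, hinner, mul_zero]
    · rw [real_inner_smul_right, real_inner_smul_left, real_inner_self_eq_norm_sq]
      field_simp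
  have hyx : ⟪y, x⟫ = 0 := by rw [real_inner_comm]; exact hxy
  -- total evaluation of C against arbitrary z, using decomposition z = ⟪x,z⟫x + w
  have decomp : ∀ z : E, ⟪x, z - ⟪x, z⟫ • x⟫ = 0 := by
    intro z
    rw [inner_sub_right, real_inner_smul_right, hxx, mul_one, sub_self]
  have decompx : ∀ z : E, ⟪x, z - ⟪x, z⟫ • x⟫ = 0 := decomp
  have hCxxx : C x y x = 0 := by rw [hC2]; exact humb2 y hxy
  have hCxx : ∀ z : E, C x x z = l₁ * ⟪x, z⟫ := by
    intro z
    calc C x x z = C x x (⟪x, z⟫ • x + (z - ⟪x, z⟫ • x)) := by congr 1; abel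
      _ = l₁ * ⟪x, z⟫ := by
          rw [map_add, map_smul, humb1, humb2 _ (decomp z)]
          simp [mul_comm]
  have hCxy : ∀ z : E, C x y z = -l₁ * ⟪y, z⟫ := by
    intro z
    have h3 : ⟪y, z - ⟪x, z⟫ • x⟫ = ⟪y, z⟫ := by
      rw [inner_sub_right, real_inner_smul_right, hyx]; ring
    calc C x y z = C x y (⟪x, z⟫ • x + (z - ⟪x, z⟫ • x)) := by congr 1; abel
      _ = -l₁ * ⟪y, z⟫ := by
          rw [map_add, map_smul, hCxxx, humb3 y _ hxy (decomp z), h3]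
          simp
  have hCyy : ∀ z : E, C y y z = -l₁ * ⟪x, z⟫ := by
    intro z
    have hyyx : C y y x = -l₁ := by
      rw [hC2, hC1, humb3 y y hxy hxy, hyy, mul_one]
    calc C y y z = C y y (⟪x, z⟫ • x + (z - ⟪x, z⟫ • x)) := by congr 1; abel
      _ = -l₁ * ⟪x, z⟫ := by
          rw [map_add, map_smul, hyyx, humb4 y y _ hxy hxy (decomp z)]
          simp [mul_comm]
  -- values of A
  have hAxx : A x x = l₁ • x := by
    apply ext_inner_right ℝ
    intro z
    rw [hA, hCxx, real_inner_smul_left]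
  have hAxy : A x y = -l₁ • y := by
    apply ext_inner_right ℝ
    intro z
    rw [hA, hCxy, real_inner_smul_left]
  have hAyx : A y x = -l₁ • y := by
    apply ext_inner_right ℝ
    intro z
    rw [hA, ← hC1, hCxy, real_inner_smul_left]
  have hAyy : A y y = -l₁ • x := by
    apply ext_inner_right ℝ
    intro z
    rw [hA, hCyy, real_inner_smul_left]
  have hAsmul : ∀ (X : E) (a : ℝ) (Y : E), A X (a • Y) = a • A X Y := by
    intro X a Y
    apply ext_inner_right ℝ
    intro z
    rw [hA, real_inner_smul_left, hA]
    simp [map_smul]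
  -- curvature values
  have hRx : R x y x = (2 * l₁ ^ 2 - c) • y := by
    rw [hR, hyx, hxx, hAyx, hAxx, hAsmul, hAsmul, hAxy, hAyx]
    module
  have hRy : R x y y = (c - 2 * l₁ ^ 2) • x := by
    rw [hR, hyy, hxy, hAyy, hAxy, hAsmul, hAsmul, hAxx, hAyy]
    module
  have hRsmul : ∀ (a : ℝ) (z : E), R x y (a • z) = a • R x y z := by
    intro a z
    rw [hR, hR, hAsmul, hAsmul, hAsmul, hAsmul, real_inner_smul_right,
      real_inner_smul_right]
    module
  -- evaluate pseudo-parallelism at (x,y,y,y,y)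
  have hCxyy : C x y y = -l₁ := by rw [hCxy, hyy, mul_one]
  have hCyxy : C y x y = -l₁ := by rw [← hC1]; exact hCxyy
  have hCyyy : C y y y = 0 := by rw [hCyy, hxy, mul_zero]
  have key := hpp x y y y y
  rw [hP, hQ, hAyy, hRsmul, hRx, hRy] at key
  simp only [map_smul, LinearMap.smul_apply, smul_eq_mul, real_inner_smul_left,
    hyy, hxy, hCxyy, hCyxy, hCyyy] at key
  constructor
  · nlinarith [key]
  · have h1 : 3 * l₁ * (c - 2 * l₁ ^ 2) = 2 * φ * l₁ := by nlinarith [key]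
    have h2 : (3 / 2 * (c - 2 * l₁ ^ 2)) * l₁ = φ * l₁ := by linarith
    have := mul_right_cancel₀ hl h2
    linarith
end

section
/- Suppose dim E ≥ 3, suppose C has the umbilical form with parameter λ₁ ≠ 0 relative to a unit vector x ∈ E, and suppose the data (C,c) is pseudo-parallel with value φ ∈ ℝ. Then φ = c − 2λ₁². -/
open RealInnerProductSpace

theorem phi_second_value
    {E : Type*} [NormedAddCommGroup E] [InnerProductSpace ℝ E] [FiniteDimensional ℝ E]
    (hdim : 3 ≤ Module.finrank ℝ E)
    (C : E →ₗ[ℝ] E →ₗ[ℝ] E →ₗ[ℝ] ℝ)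
    (hC1 : ∀ X Y Z : E, C X Y Z = C Y X Z)
    (hC2 : ∀ X Y Z : E, C X Y Z = C X Z Y)
    (A : E → E → E)
    (hA : ∀ X Y Z : E, ⟪A X Y, Z⟫ = C X Y Z)
    (c : ℝ) (R : E → E → E → E)
    (hR : ∀ X Y Z : E, R X Y Z = c • (⟪Y, Z⟫ • X - ⟪X, Z⟫ • Y) + A X (A Y Z) - A Y (A X Z))
    (P : E → E → E → E → E → ℝ)
    (hP : ∀ X Y V W Z : E, P X Y V W Z
      = ⟪R X Y (A V W), Z⟫ - C (R X Y V) W Z - C V (R X Y W) Z)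
    (Q : E → E → E → E → E → ℝ)
    (hQ : ∀ X Y V W Z : E, Q X Y V W Z
      = ⟪Y, V⟫ * C X W Z - ⟪X, V⟫ * C Y W Z + ⟪Y, W⟫ * C X V Z - ⟪X, W⟫ * C Y V Z)
    (φ : ℝ)
    (hpp : ∀ X Y V W Z : E, P X Y V W Z + φ * Q X Y V W Z = 0)
    (x : E) (hx : ‖x‖ = 1) (l₁ : ℝ)
    (humb1 : C x x x = l₁)
    (humb2 : ∀ v : E, ⟪x, v⟫ = 0 → C x x v = 0)
    (humb3 : ∀ v w : E, ⟪x, v⟫ = 0 → ⟪x, w⟫ = 0 → C x v w = -l₁ * ⟪v, w⟫)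
    (humb4 : ∀ u v w : E, ⟪x, u⟫ = 0 → ⟪x, v⟫ = 0 → ⟪x, w⟫ = 0 → C u v w = 0)
    (hl : l₁ ≠ 0) :
    φ = c - 2 * l₁ ^ 2 := by
  -- Basic facts about x
  have hxx : ⟪x, x⟫ = (1:ℝ) := by
    rw [real_inner_self_eq_norm_mul_norm, hx]; norm_num
  have hx0 : x ≠ 0 := by intro h; rw [h, norm_zero] at hx; norm_num at hx
  -- find an orthonormal pair y, z orthogonal to x
  have h1 : Module.finrank ℝ (ℝ ∙ x) = 1 := finrank_span_singleton hx0
  have h2 : Module.finrank ℝ (ℝ ∙ x) + Module.finrank ℝ (ℝ ∙ x)ᗮ = Module.finrank ℝ E :=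
    Submodule.finrank_add_finrank_orthogonal (ℝ ∙ x)
  have h3 : (ℝ ∙ x)ᗮ ≠ ⊥ := by
    intro hbot
    rw [hbot, finrank_bot] at h2; omega
  obtain ⟨y', hy', hy'0⟩ := Submodule.exists_mem_ne_zero_of_ne_bot h3
  have hxy' : ⟪x, y'⟫ = 0 := hy' x (Submodule.mem_span_singleton_self x)
  set y : E := ‖y'‖⁻¹ • y' with hydef
  have hynorm : ‖y‖ = 1 := norm_smul_inv_norm hy'0
  have hxy : ⟪x, y⟫ = 0 := by rw [hydef, real_inner_smul_right, hxy']; ring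
  have hyy : ⟪y, y⟫ = (1:ℝ) := by
    rw [real_inner_self_eq_norm_mul_norm, hynorm]; norm_num
  have h4 : Module.finrank ℝ (Submodule.span ℝ ({x, y} : Set E)) ≤ 2 := by
    classical
    calc Module.finrank ℝ (Submodule.span ℝ ({x, y} : Set E))
        ≤ ({x, y} : Set E).toFinset.card := finrank_span_le_card _
      _ ≤ 2 := by
          simp only [Set.toFinset_insert, Set.toFinset_singleton]
          exact (Finset.card_insert_le _ _).trans (by simp)
  have h5 : Module.finrank ℝ (Submodule.span ℝ ({x, y} : Set E))
      + Module.finrank ℝ (Submodule.span ℝ ({x, y} : Set E))ᗮ = Module.finrank ℝ E :=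
    Submodule.finrank_add_finrank_orthogonal _
  have h6 : (Submodule.span ℝ ({x, y} : Set E))ᗮ ≠ ⊥ := by
    intro hbot; rw [hbot, finrank_bot] at h5; omega
  obtain ⟨z', hz', hz'0⟩ := Submodule.exists_mem_ne_zero_of_ne_bot h6
  have hxz' : ⟪x, z'⟫ = 0 := hz' x (Submodule.subset_span (by simp))
  have hyz' : ⟪y, z'⟫ = 0 := hz' y (Submodule.subset_span (by simp))
  set z : E := ‖z'‖⁻¹ • z' with hzdef
  have hznorm : ‖z‖ = 1 := norm_smul_inv_norm hz'0
  have hxz : ⟪x, z⟫ = 0 := by rw [hzdef, real_inner_smul_right, hxz']; ring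
  have hyz : ⟪y, z⟫ = 0 := by rw [hzdef, real_inner_smul_right, hyz']; ring
  have hzz : ⟪z, z⟫ = (1:ℝ) := by
    rw [real_inner_self_eq_norm_mul_norm, hznorm]; norm_num
  -- determine A on relevant vectors
  have hwperp : ∀ Z : E, ⟪x, Z - ⟪x, Z⟫ • x⟫ = 0 := by
    intro Z; rw [inner_sub_right, real_inner_smul_right, hxx]; ring
  have hCz : ∀ (u v Z : E), C u v Z = ⟪x, Z⟫ * C u v x + C u v (Z - ⟪x, Z⟫ • x) := by
    intro u v Z
    have h : Z = ⟪x, Z⟫ • x + (Z - ⟪x, Z⟫ • x) := by abel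
    conv_lhs => rw [h]
    rw [map_add, map_smul]; rfl
  have L1 : ∀ v w : E, ⟪x, v⟫ = 0 → ⟪x, w⟫ = 0 → A v w = (-l₁ * ⟪v, w⟫) • x := by
    intro v w hv hw
    apply ext_inner_right ℝ
    intro Z
    rw [hA, hCz v w Z, humb4 v w _ hv hw (hwperp Z), real_inner_smul_left]
    have hvwx : C v w x = -l₁ * ⟪v, w⟫ := by
      rw [hC2 v w x, hC1 v x w, humb3 v w hv hw]
    rw [hvwx]; ring
  have L2 : ∀ v : E, ⟪x, v⟫ = 0 → A x v = (-l₁) • v := by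
    intro v hv
    apply ext_inner_right ℝ
    intro Z
    rw [hA, hCz x v Z, real_inner_smul_left]
    have h1 : C x v x = 0 := by rw [hC2]; exact humb2 v hv
    rw [h1, humb3 v _ hv (hwperp Z), inner_sub_right, real_inner_smul_right]
    rw [real_inner_comm v x] at hv
    rw [hv]; ring
  have L3 : ∀ a : ℝ, A x (a • x) = (a * l₁) • x := by
    intro a
    apply ext_inner_right ℝ
    intro Z
    rw [hA, real_inner_smul_left]
    have h : C x (a • x) Z = a * C x x Z := by rw [map_smul]; rfl
    rw [h, hCz x x Z, humb1, humb2 _ (hwperp Z)]; ring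
  have L4 : ∀ (v : E) (a : ℝ), ⟪x, v⟫ = 0 → A v (a • x) = (-l₁ * a) • v := by
    intro v a hv
    apply ext_inner_right ℝ
    intro Z
    rw [hA, real_inner_smul_left]
    have h0 : C v (a • x) Z = a * C v x Z := by rw [map_smul]; rfl
    have h1 : C v x x = 0 := by rw [hC1, hC2]; exact humb2 v hv
    have h2 : C v x (Z - ⟪x, Z⟫ • x) = -l₁ * ⟪v, Z - ⟪x, Z⟫ • x⟫ := by
      rw [hC1]; exact humb3 v _ hv (hwperp Z)
    rw [h0, hCz v x Z, h1, h2, inner_sub_right, real_inner_smul_right]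
    rw [real_inner_comm v x] at hv
    rw [hv]; ring
  -- specific A values
  have hAyy : A y y = (-l₁) • x := by rw [L1 y y hxy hxy, hyy, mul_one]
  have hAzz : A z z = (-l₁) • x := by rw [L1 z z hxz hxz, hzz, mul_one]
  have hAxy2 : A x y = (-l₁) • y := L2 y hxy
  have hAxz2 : A x z = (-l₁) • z := L2 z hxz
  have hAyz : A y z = 0 := by rw [L1 y z hxy hxz, hyz]; simp
  -- R values
  have hyx : ⟪y, x⟫ = 0 := by rw [real_inner_comm]; exact hxy
  have hRax : ∀ a : ℝ, R x y (a • x) = (a * (2 * l₁ ^ 2 - c)) • y := by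
    intro a
    rw [hR, real_inner_smul_right, real_inner_smul_right, hyx, hxx, L3 a, L4 y a hxy]
    have h1 : A x ((-l₁ * a) • y) = (-l₁) • ((-l₁ * a) • y) :=
      L2 _ (by rw [real_inner_smul_right, hxy]; ring)
    rw [h1, L4 y (a * l₁) hxy]
    module
  have hRy : R x y y = (c - 2 * l₁ ^ 2) • x := by
    rw [hR, hyy, hxy, hAyy, hAxy2, L3 (-l₁)]
    have h1 : A y ((-l₁) • y) = (-l₁ * ⟪y, (-l₁) • y⟫) • x :=
      L1 y _ hxy (by rw [real_inner_smul_right, hxy]; ring)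
    rw [h1, real_inner_smul_right, hyy]
    module
  have hRz : R x y z = 0 := by
    rw [hR, hyz, hxz, hAyz, hAxz2]
    have h0 : A x (0 : E) = (-l₁) • (0 : E) := L2 0 (by simp)
    have h1 : A y ((-l₁) • z) = (-l₁ * ⟪y, (-l₁) • z⟫) • x :=
      L1 y _ hxy (by rw [real_inner_smul_right, hxz]; ring)
    rw [h0, h1, real_inner_smul_right, hyz]
    module
  -- useful C values
  have hCxyy : C x y y = -l₁ := by rw [humb3 y y hxy hxy, hyy]; ring
  have hCyxy : C y x y = -l₁ := by rw [hC1 y x y]; exact hCxyy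
  -- Equation from (x, y, z, z, y): gives l₁ * (2 l₁² - c) = 0
  have eq2 := hpp x y z z y
  rw [hP, hQ, hAzz, hRax (-l₁), hRz] at eq2
  rw [real_inner_smul_left, hyy] at eq2
  simp only [map_zero, LinearMap.zero_apply, hxz, hyz, zero_mul, mul_zero, sub_zero,
    add_zero, zero_add, mul_one, zero_sub, sub_self] at eq2
  have key : l₁ * (2 * l₁ ^ 2 - c) = 0 := by linear_combination -eq2
  -- Equation from (x, y, y, y, y): gives 3 l₁ (c - 2 l₁²) - 2 l₁ φ = 0
  have eq1 := hpp x y y y y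
  rw [hP, hQ, hAyy, hRax (-l₁), hRy] at eq1
  rw [real_inner_smul_left, hyy] at eq1
  simp only [map_smul, LinearMap.smul_apply, smul_eq_mul, hCxyy, hCyxy, hxy, hyy] at eq1
  have hφ : l₁ * φ = 0 := by linear_combination (-1/2 : ℝ) * eq1 - (3/2 : ℝ) * key
  have hc : 2 * l₁ ^ 2 - c = 0 := by
    rcases mul_eq_zero.mp key with h | h
    · exact absurd h hl
    · exact h
  have hφ0 : φ = 0 := by
    rcases mul_eq_zero.mp hφ with h | h
    · exact absurd h hl
    · exact h
  rw [hφ0]; linarith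
end

section
/- Suppose dim E ≥ 3, suppose C has the umbilical form with parameter λ₁ ≠ 0 relative to a unit vector x ∈ E, and suppose the data (C,c) is pseudo-parallel with value φ ∈ ℝ. Then φ = 0 and c = 2λ₁². -/
open RealInnerProductSpace

theorem phi_vanishes
    {E : Type*} [NormedAddCommGroup E] [InnerProductSpace ℝ E] [FiniteDimensional ℝ E]
    (hdim : 3 ≤ Module.finrank ℝ E)
    (C : E →ₗ[ℝ] E →ₗ[ℝ] E →ₗ[ℝ] ℝ)
    (hC1 : ∀ X Y Z : E, C X Y Z = C Y X Z)
    (hC2 : ∀ X Y Z : E, C X Y Z = C X Z Y)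
    (A : E → E → E)
    (hA : ∀ X Y Z : E, ⟪A X Y, Z⟫ = C X Y Z)
    (c : ℝ) (R : E → E → E → E)
    (hR : ∀ X Y Z : E, R X Y Z = c • (⟪Y, Z⟫ • X - ⟪X, Z⟫ • Y) + A X (A Y Z) - A Y (A X Z))
    (P : E → E → E → E → E → ℝ)
    (hP : ∀ X Y V W Z : E, P X Y V W Z
      = ⟪R X Y (A V W), Z⟫ - C (R X Y V) W Z - C V (R X Y W) Z)
    (Q : E → E → E → E → E → ℝ)
    (hQ : ∀ X Y V W Z : E, Q X Y V W Z
      = ⟪Y, V⟫ * C X W Z - ⟪X, V⟫ * C Y W Z + ⟪Y, W⟫ * C X V Z - ⟪X, W⟫ * C Y V Z)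
    (φ : ℝ)
    (hpp : ∀ X Y V W Z : E, P X Y V W Z + φ * Q X Y V W Z = 0)
    (x : E) (hx : ‖x‖ = 1) (l₁ : ℝ)
    (humb1 : C x x x = l₁)
    (humb2 : ∀ v : E, ⟪x, v⟫ = 0 → C x x v = 0)
    (humb3 : ∀ v w : E, ⟪x, v⟫ = 0 → ⟪x, w⟫ = 0 → C x v w = -l₁ * ⟪v, w⟫)
    (humb4 : ∀ u v w : E, ⟪x, u⟫ = 0 → ⟪x, v⟫ = 0 → ⟪x, w⟫ = 0 → C u v w = 0)
    (hl : l₁ ≠ 0) :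
    φ = 0 ∧ c = 2 * l₁ ^ 2 := by
  have hxx : ⟪x, x⟫ = 1 := by
    rw [real_inner_self_eq_norm_sq, hx]; norm_num
  have hx0 : x ≠ 0 := by
    intro h; rw [h, norm_zero] at hx; norm_num at hx
  -- find two orthonormal vectors orthogonal to x
  obtain ⟨y, z, hxy, hxz, hyz, hyy, hzz⟩ :
      ∃ y z : E, ⟪x, y⟫ = 0 ∧ ⟪x, z⟫ = 0 ∧ ⟪y, z⟫ = 0 ∧ ⟪y, y⟫ = 1 ∧ ⟪z, z⟫ = 1 := by
    have hspan : Module.finrank ℝ (ℝ ∙ x) = 1 := finrank_span_singleton hx0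
    have hsum := Submodule.finrank_add_finrank_orthogonal (K := (ℝ ∙ x))
    have hfin : 2 ≤ Module.finrank ℝ ((ℝ ∙ x)ᗮ : Submodule ℝ E) := by
      rw [hspan] at hsum; omega
    let b := stdOrthonormalBasis ℝ ((ℝ ∙ x)ᗮ : Submodule ℝ E)
    have h0 : 0 < Module.finrank ℝ ((ℝ ∙ x)ᗮ : Submodule ℝ E) := by omega
    have h1 : 1 < Module.finrank ℝ ((ℝ ∙ x)ᗮ : Submodule ℝ E) := by omega
    have hb := b.orthonormal
    rw [orthonormal_iff_ite] at hb
    have hmem : ∀ i : Fin (Module.finrank ℝ ((ℝ ∙ x)ᗮ : Submodule ℝ E)), ⟪x, (b i : E)⟫ = 0 := by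
      intro i
      exact (Submodule.mem_orthogonal (ℝ ∙ x) (b i : E)).mp (b i).2 x
        (Submodule.mem_span_singleton_self x)
    refine ⟨(b ⟨0, h0⟩ : E), (b ⟨1, h1⟩ : E), hmem _, hmem _, ?_, ?_, ?_⟩
    · have := hb ⟨0, h0⟩ ⟨1, h1⟩
      rw [Submodule.coe_inner] at this
      simpa using this
    · have := hb ⟨0, h0⟩ ⟨0, h0⟩
      rw [Submodule.coe_inner] at this
      simpa using this
    · have := hb ⟨1, h1⟩ ⟨1, h1⟩
      rw [Submodule.coe_inner] at this
      simpa using this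
  have hyx : ⟪y, x⟫ = 0 := by rw [real_inner_comm]; exact hxy
  have hzx : ⟪z, x⟫ = 0 := by rw [real_inner_comm]; exact hxz
  have hzy : ⟪z, y⟫ = 0 := by rw [real_inner_comm]; exact hyz
  -- scalar formulas for C
  have decomp : ∀ (f : E →ₗ[ℝ] ℝ) (Z : E), f Z = ⟪x, Z⟫ * f x + f (Z - ⟪x, Z⟫ • x) := by
    intro f Z
    rw [map_sub, map_smul, smul_eq_mul]; ring
  have hperp : ∀ Z : E, ⟪x, Z - ⟪x, Z⟫ • x⟫ = 0 := by
    intro Z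
    rw [inner_sub_right, real_inner_smul_right, hxx]; ring
  have cxx : ∀ Z : E, C x x Z = l₁ * ⟪x, Z⟫ := by
    intro Z
    rw [decomp (C x x) Z, humb1, humb2 _ (hperp Z)]; ring
  have cxv : ∀ v : E, ⟪x, v⟫ = 0 → ∀ Z : E, C x v Z = -l₁ * ⟪v, Z⟫ := by
    intro v hv Z
    rw [decomp (C x v) Z, humb3 v _ hv (hperp Z)]
    have h1 : (C x v) x = 0 := by rw [hC2]; exact humb2 v hv
    have h2 : ⟪v, x⟫ = 0 := by rw [real_inner_comm]; exact hv
    rw [h1, inner_sub_right, real_inner_smul_right, h2]; ring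
  have cvw : ∀ v w : E, ⟪x, v⟫ = 0 → ⟪x, w⟫ = 0 → ∀ Z : E,
      C v w Z = -l₁ * ⟪v, w⟫ * ⟪x, Z⟫ := by
    intro v w hv hw Z
    rw [decomp (C v w) Z, humb4 v w _ hv hw (hperp Z)]
    have h1 : (C v w) x = -l₁ * ⟪v, w⟫ := by
      rw [hC2, hC1]; exact humb3 v w hv hw
    rw [h1]; ring
  -- vector formulas for A
  have hAsmul : ∀ (X : E) (a : ℝ) (Y : E), A X (a • Y) = a • A X Y := by
    intro X a Y
    apply ext_inner_right ℝ
    intro Z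
    rw [hA, real_inner_smul_left, hA, map_smul, LinearMap.smul_apply, smul_eq_mul]
  have hA0 : ∀ X : E, A X 0 = 0 := by
    intro X
    have h := hAsmul X 0 0
    simpa using h
  have hAxx : A x x = l₁ • x := by
    apply ext_inner_right ℝ
    intro Z
    rw [hA, cxx, real_inner_smul_left]
  have hAxy : A x y = (-l₁) • y := by
    apply ext_inner_right ℝ
    intro Z
    rw [hA, cxv y hxy, real_inner_smul_left]
  have hAxz : A x z = (-l₁) • z := by
    apply ext_inner_right ℝ
    intro Z
    rw [hA, cxv z hxz, real_inner_smul_left]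
  have hAyx : A y x = (-l₁) • y := by
    apply ext_inner_right ℝ
    intro Z
    rw [hA, hC1, cxv y hxy, real_inner_smul_left]
  have hAyy : A y y = (-l₁) • x := by
    apply ext_inner_right ℝ
    intro Z
    rw [hA, cvw y y hxy hxy, hyy, real_inner_smul_left]; ring
  have hAyz : A y z = 0 := by
    apply ext_inner_right ℝ
    intro Z
    rw [hA, cvw y z hxy hxz, hyz, inner_zero_left]; ring
  -- curvature values
  have hR2 : R x y y = (c - 2 * l₁ ^ 2) • x := by
    rw [hR]
    simp only [hAyy, hAxy, hAsmul, hAxx, hyy, hxy]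
    module
  have hR3 : R x y z = 0 := by
    rw [hR]
    simp only [hAyz, hAxz, hAsmul, hA0, hyz, hxz]
    module
  have hR4 : R x y ((-l₁) • x) = (l₁ * c - 2 * l₁ ^ 3) • y := by
    rw [hR]
    simp only [hAsmul, hAyx, hAxx, hAxy, real_inner_smul_right, hyx, hxx]
    module
  have hR0 : R x y (0 : E) = 0 := by
    rw [hR]
    simp only [hA0, inner_zero_right]
    module
  have hCxyy : C x y y = -l₁ := by rw [cxv y hxy, hyy]; ring
  have hCyxy : C y x y = -l₁ := by rw [hC1]; exact hCxyy
  have hCxzz : C x z z = -l₁ := by rw [cxv z hxz, hzz]; ring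
  have hCyxz : C y x z = 0 := by rw [hC1, cxv y hxy, hyz]; ring
  have hCxyz : C x y z = 0 := by rw [cxv y hxy, hyz]; ring
  have hCyyy : C y y y = 0 := by rw [cvw y y hxy hxy, hxy]; ring
  have hCyyz : C y y z = 0 := by rw [cvw y y hxy hxy, hxz]; ring
  have hCyzz : C y z z = 0 := by rw [cvw y z hxy hxz, hxz]; ring
  -- first equation
  have e1 := hpp x y y y y
  rw [hP, hQ, hAyy, hR4, hR2] at e1
  simp only [map_smul, LinearMap.smul_apply, smul_eq_mul, real_inner_smul_left,
    hCxyy, hCyxy, hCyyy, hxy, hyy, hyx] at e1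
  -- second equation
  have e2 := hpp x y y z z
  rw [hP, hQ, hAyz, hR0, hR3, hR2] at e2
  simp only [inner_zero_left, map_smul, LinearMap.smul_apply, smul_eq_mul, map_zero,
    LinearMap.zero_apply, hCxzz, hCyzz, hCyyz, hCxyz, hCyxz, hyy, hxy, hyz, hxz] at e2
  have hKey : l₁ * (c - 2 * l₁ ^ 2) = 0 := by linear_combination e1 - 2 * e2
  have hKey2 : l₁ * φ = 0 := by linear_combination e1 - 3 * e2
  have hc0 : c - 2 * l₁ ^ 2 = 0 := (mul_eq_zero.mp hKey).resolve_left hl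
  have hφ : φ = 0 := (mul_eq_zero.mp hKey2).resolve_left hl
  exact ⟨hφ, by linarith⟩
end

section
/- Suppose dim E = 2 and suppose the data (C,c) is pseudo-parallel with value φ ∈ ℝ, φ ≠ 0. Then C is minimal at the point, i.e. for every orthonormal basis {e₁, e₂} of E and every v ∈ E one has C(e₁,e₁,v) + C(e₂,e₂,v) = 0 (equivalently, the trace of A_v vanishes for all v, i.e. the mean curvature vector vanishes). -/
open RealInnerProductSpace

theorem surface_pseudo_parallel_minimal
    {E : Type*} [NormedAddCommGroup E] [InnerProductSpace ℝ E] [FiniteDimensional ℝ E]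
    (hdim : Module.finrank ℝ E = 2)
    (C : E →ₗ[ℝ] E →ₗ[ℝ] E →ₗ[ℝ] ℝ)
    (hC1 : ∀ X Y Z : E, C X Y Z = C Y X Z)
    (hC2 : ∀ X Y Z : E, C X Y Z = C X Z Y)
    (A : E → E → E)
    (hA : ∀ X Y Z : E, ⟪A X Y, Z⟫ = C X Y Z)
    (c : ℝ) (R : E → E → E → E)
    (hR : ∀ X Y Z : E, R X Y Z = c • (⟪Y, Z⟫ • X - ⟪X, Z⟫ • Y) + A X (A Y Z) - A Y (A X Z))
    (P : E → E → E → E → E → ℝ)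
    (hP : ∀ X Y V W Z : E, P X Y V W Z
      = ⟪R X Y (A V W), Z⟫ - C (R X Y V) W Z - C V (R X Y W) Z)
    (Q : E → E → E → E → E → ℝ)
    (hQ : ∀ X Y V W Z : E, Q X Y V W Z
      = ⟪Y, V⟫ * C X W Z - ⟪X, V⟫ * C Y W Z + ⟪Y, W⟫ * C X V Z - ⟪X, W⟫ * C Y V Z)
    (φ : ℝ)
    (hpp : ∀ X Y V W Z : E, P X Y V W Z + φ * Q X Y V W Z = 0)
    (hφ : φ ≠ 0) :
    ∀ e₁ e₂ : E, ‖e₁‖ = 1 → ‖e₂‖ = 1 → ⟪e₁, e₂⟫ = 0 →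
      ∀ v : E, C e₁ e₁ v + C e₂ e₂ v = 0 := by
  -- A is symmetric as a bilinear pairing
  have hAsym : ∀ X U Z : E, ⟪A X U, Z⟫ = ⟪A X Z, U⟫ := by
    intro X U Z; rw [hA, hA, hC2]
  -- R X Y is skew-symmetric
  have hRskew : ∀ X Y U Z : E, ⟪R X Y U, Z⟫ = -⟪R X Y Z, U⟫ := by
    intro X Y U Z
    have h1 : ⟪A X (A Y U), Z⟫ = ⟪A Y (A X Z), U⟫ := by
      rw [hAsym, real_inner_comm, hAsym]
    have h2 : ⟪A Y (A X U), Z⟫ = ⟪A X (A Y Z), U⟫ := by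
      rw [hAsym, real_inner_comm, hAsym]
    rw [hR, hR]
    simp only [inner_add_left, inner_sub_left, inner_smul_left, real_inner_smul_left,
      RCLike.inner_apply, conj_trivial]
    rw [h1, h2]
    ring
  -- P expressed symmetrically
  have key : ∀ X Y V W Z : E, P X Y V W Z
      = -(C V W (R X Y Z)) - C (R X Y V) W Z - C V (R X Y W) Z := by
    intro X Y V W Z
    rw [hP, hRskew, real_inner_comm, hA]
  have hPsymm : ∀ X Y V W Z : E, P X Y V W Z = P X Y V Z W := by
    intro X Y V W Z
    rw [key, key, hC2 V W (R X Y Z), hC2 (R X Y V) W Z, hC2 V (R X Y W) Z]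
    ring
  have hQsymm : ∀ X Y V W Z : E, Q X Y V W Z = Q X Y V Z W := by
    intro X Y V W Z
    have h1 := hpp X Y V W Z
    have h2 := hpp X Y V Z W
    rw [hPsymm X Y V W Z] at h1
    have : φ * Q X Y V W Z = φ * Q X Y V Z W := by linarith
    exact mul_left_cancel₀ hφ this
  intro e₁ e₂ he₁ he₂ h12
  have h11 : ⟪e₁, e₁⟫ = (1 : ℝ) := by
    rw [real_inner_self_eq_norm_sq, he₁]; norm_num
  have h22 : ⟪e₂, e₂⟫ = (1 : ℝ) := by
    rw [real_inner_self_eq_norm_sq, he₂]; norm_num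
  have h21 : ⟪e₂, e₁⟫ = (0 : ℝ) := by rw [real_inner_comm]; exact h12
  -- first trace identity: v = e₁
  have key1 : C e₁ e₁ e₁ + C e₂ e₂ e₁ = 0 := by
    have h := hQsymm e₁ e₂ e₁ e₁ e₂
    rw [hQ, hQ, h11, h12, h21, h22] at h
    have e1 : C e₂ e₁ e₂ = C e₂ e₂ e₁ := hC2 e₂ e₁ e₂
    have e2 : C e₁ e₂ e₁ = C e₁ e₁ e₂ := hC2 e₁ e₂ e₁
    have e3 : C e₂ e₁ e₁ = C e₁ e₁ e₂ := by rw [hC1, hC2]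
    linarith
  -- second trace identity: v = e₂
  have key2 : C e₁ e₁ e₂ + C e₂ e₂ e₂ = 0 := by
    have h := hQsymm e₁ e₂ e₂ e₂ e₁
    rw [hQ, hQ, h11, h12, h21, h22] at h
    have e1 : C e₁ e₂ e₁ = C e₁ e₁ e₂ := hC2 e₁ e₂ e₁
    have e2 : C e₂ e₁ e₂ = C e₂ e₂ e₁ := hC2 e₂ e₁ e₂
    have e3 : C e₁ e₂ e₂ = C e₂ e₂ e₁ := by rw [hC1, hC2]
    linarith
  -- the linear functional v ↦ C e₁ e₁ v + C e₂ e₂ v vanishes on a spanning set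
  intro v
  set L : E →ₗ[ℝ] ℝ := C e₁ e₁ + C e₂ e₂ with hL
  have hLe₁ : L e₁ = 0 := by simpa [hL] using key1
  have hLe₂ : L e₂ = 0 := by simpa [hL] using key2
  -- e₁, e₂ form an orthonormal family spanning E
  have horth : Orthonormal ℝ (![e₁, e₂] : Fin 2 → E) := by
    rw [orthonormal_iff_ite]
    intro i j
    fin_cases i <;> fin_cases j <;>
      simp [h11, h12, h21, h22, he₁, he₂]
  have hspan : Submodule.span ℝ (Set.range (![e₁, e₂] : Fin 2 → E)) = ⊤ := by
    apply horth.linearIndependent.span_eq_top_of_card_eq_finrank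
    simp [hdim]
  have hsub : Set.range (![e₁, e₂] : Fin 2 → E) ⊆ (LinearMap.ker L : Set E) := by
    rintro x ⟨i, rfl⟩
    fin_cases i <;> simp [hLe₁, hLe₂]
  have : v ∈ LinearMap.ker L := by
    have h := Submodule.span_le.mpr hsub
    rw [hspan] at h
    exact h (Submodule.mem_top)
  simpa [hL] using this
end

section
/- Suppose that for every X ∈ E and all Y, Z ⊥ X one has ⟨X,X⟩·C(Y,Z,X) = −⟨Y,Z⟩·C(X,X,X), and suppose x ∈ E is a unit vector with C(x,x,v) = 0 for all v ⊥ x. Then C(y,y,y) = 0 for every y ∈ E with y ⊥ x, and consequently (by total symmetry and polarization) C(y,z,w) = 0 for all y, z, w ∈ E perpendicular to x. -/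
open RealInnerProductSpace

theorem cubic_vanishes_on_orthogonal_complement
    {E : Type*} [NormedAddCommGroup E] [InnerProductSpace ℝ E] [FiniteDimensional ℝ E]
    (C : E →ₗ[ℝ] E →ₗ[ℝ] E →ₗ[ℝ] ℝ)
    (hC1 : ∀ X Y Z : E, C X Y Z = C Y X Z)
    (hC2 : ∀ X Y Z : E, C X Y Z = C X Z Y)
    (hperp : ∀ X Y Z : E, ⟪X, Y⟫ = 0 → ⟪X, Z⟫ = 0 →
      (⟪X, X⟫) * C Y Z X = -(⟪Y, Z⟫ * C X X X))
    (x : E) (hx : ‖x‖ = 1)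
    (hxx : ∀ v : E, ⟪x, v⟫ = 0 → C x x v = 0) :
    (∀ y : E, ⟪x, y⟫ = 0 → C y y y = 0) ∧
    (∀ y z w : E, ⟪x, y⟫ = 0 → ⟪x, z⟫ = 0 → ⟪x, w⟫ = 0 → C y z w = 0) := by
  have hxx1 : (⟪x, x⟫ : ℝ) = 1 := by
    rw [real_inner_self_eq_norm_sq, hx]; norm_num
  have part1 : ∀ y : E, ⟪x, y⟫ = 0 → C y y y = 0 := by
    intro y hy
    have hyx : ⟪y, x⟫ = 0 := by rw [real_inner_comm]; exact hy
    have hp := hperp y x x hyx hyx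
    rw [hxx y hy, hxx1] at hp
    linarith
  refine ⟨part1, ?_⟩
  have part2 : ∀ a b : E, ⟪x, a⟫ = 0 → ⟪x, b⟫ = 0 → C a a b = 0 := by
    intro a b ha hb
    have hab : ⟪x, a + b⟫ = 0 := by rw [inner_add_right, ha, hb]; ring
    have hab' : ⟪x, a - b⟫ = 0 := by rw [inner_sub_right, ha, hb]; ring
    have e1 := part1 (a + b) hab
    have e2 := part1 (a - b) hab'
    have e3 := part1 a ha
    have e4 := part1 b hb
    simp only [map_add, map_sub, LinearMap.add_apply, LinearMap.sub_apply] at e1 e2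
    have s1 : C a b a = C a a b := hC2 a b a
    have s2 : C b a a = C a b a := hC1 b a a
    have s3 : C a b b = C b a b := hC1 a b b
    have s4 : C b a b = C b b a := hC2 b a b
    linarith
  intro y z w hy hz hw
  have hyz : ⟪x, y + z⟫ = 0 := by rw [inner_add_right, hy, hz]; ring
  have e := part2 (y + z) w hyz hw
  simp only [map_add, LinearMap.add_apply] at e
  have s : C z y w = C y z w := hC1 z y w
  have e1 := part2 y w hy hw
  have e2 := part2 z w hz hw
  linarith
end
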